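/- For every p ∈ (1,∞) and every dimension d ≥ 1 there exists a constant C > 0 such that for all vectors a, b ∈ ℝ^d one has C^{−1}|b|²(|a|+|b|)^{p−2} ≤ |a+b|^p − |a|^p − p|a|^{p−2}a·b ≤ C|b|²(|a|+|b|)^{p−2}, with the conventions |a|^{p−2}a = 0 when a = 0 and 0·(0)^{p−2} = 0 when a = b = 0. -/

import Mathlib

open scoped RealInnerProductSpace

noncomputable section

abbrev Ed (d : ℕ) : Type := EuclideanSpace ℝ (Fin d)

namespace St2Aux

open Real

lemma fact_low {α : ℝ} (hα : 0 < α) : ∃ c : ℝ, 0 < c ∧ ∀ s r : ℝ, 0 ≤ r → r ≤ s →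
    c * ((s - r) * (s + r) ^ (α - 1)) ≤ s ^ α - r ^ α := by
  rcases le_or_gt 1 α with h1 | h1
  · refine ⟨(2:ℝ)^(1-α), rpow_pos_of_pos two_pos _, fun s r hr hrs => ?_⟩
    rcases (hr.trans hrs).eq_or_lt with h | hs
    · have hr0 : r = 0 := le_antisymm (hrs.trans h.ge) hr
      rw [hr0, ← h]; simp
    · have e : s^(α-1) * s = s^α := by
        rw [← rpow_add_one hs.ne' (α-1), sub_add_cancel]
      have er : r^(α-1) * r = r^α := by
        rw [← rpow_add_one' hr (by simpa using hα.ne'), sub_add_cancel]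
      have mono : r^(α-1) ≤ s^(α-1) := rpow_le_rpow hr hrs (by linarith)
      have key1 : s^(α-1) * (s - r) ≤ s^α - r^α := by
        nlinarith [mul_le_mul_of_nonneg_left mono hr]
      have key2 : (2:ℝ)^(1-α) * (s+r)^(α-1) ≤ s^(α-1) := by
        have h2 : ((s+r)/2)^(α-1) ≤ s^(α-1) :=
          rpow_le_rpow (by linarith) (by linarith) (by linarith)
        have e2 : ((s+r)/2)^(α-1) = (2:ℝ)^(1-α) * (s+r)^(α-1) := by
          rw [div_rpow (by linarith) (by norm_num), show (1:ℝ)-α = -(α-1) by ring,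
            rpow_neg (by norm_num)]
          ring
        linarith [e2 ▸ h2]
      calc (2:ℝ)^(1-α) * ((s - r) * (s+r)^(α-1))
          = ((2:ℝ)^(1-α) * (s+r)^(α-1)) * (s - r) := by ring
        _ ≤ s^(α-1) * (s-r) := mul_le_mul_of_nonneg_right key2 (by linarith)
        _ ≤ s^α - r^α := key1
  · refine ⟨α, hα, fun s r hr hrs => ?_⟩
    rcases (hr.trans hrs).eq_or_lt with h | hs
    · have hr0 : r = 0 := le_antisymm (hrs.trans h.ge) hr
      rw [hr0, ← h]; simp
    · have hb := rpow_one_add_le_one_add_mul_self (s := r/s - 1)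
        (by nlinarith [div_nonneg hr hs.le]) hα.le h1.le
      rw [show 1 + (r/s - 1) = r/s by ring] at hb
      have h3 := mul_le_mul_of_nonneg_left hb (rpow_pos_of_pos hs α).le
      have h4 : s^α * (r/s)^α = r^α := by
        rw [div_rpow hr hs.le]; field_simp
      have h5 : s^α * (1 + α*(r/s-1)) = s^α + α*(s^(α-1)*(r-s)) := by
        rw [show s^(α-1) = s^α/s from rpow_sub_one hs.ne' α]
        field_simp
      have h2 : r^α ≤ s^α + α * (s^(α-1) * (r - s)) := by
        rw [← h5, ← h4]; exact h3
      have key2 : (s+r)^(α-1) ≤ s^(α-1) :=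
        rpow_le_rpow_of_nonpos hs (by linarith) (by linarith)
      calc α * ((s - r) * (s+r)^(α-1)) ≤ α * ((s - r) * s^(α-1)) :=
            mul_le_mul_of_nonneg_left
              (mul_le_mul_of_nonneg_left key2 (by linarith)) hα.le
        _ ≤ s^α - r^α := by nlinarith [h2]


lemma fact_up {α : ℝ} (hα : 0 < α) : ∃ C : ℝ, 0 < C ∧ ∀ s r : ℝ, 0 ≤ r → r ≤ s →
    s ^ α - r ^ α ≤ C * ((s - r) * (s + r) ^ (α - 1)) := by
  rcases le_or_gt 1 α with h1 | h1
  · refine ⟨α, hα, fun s r hr hrs => ?_⟩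
    rcases (hr.trans hrs).eq_or_lt with h | hs
    · have hr0 : r = 0 := le_antisymm (hrs.trans h.ge) hr
      rw [hr0, ← h]; simp
    · have hb := one_add_mul_self_le_rpow_one_add (s := r/s - 1)
        (by nlinarith [div_nonneg hr hs.le]) h1
      rw [show 1 + (r/s - 1) = r/s by ring] at hb
      have h3 := mul_le_mul_of_nonneg_left hb (rpow_pos_of_pos hs α).le
      have h4 : s^α * (r/s)^α = r^α := by rw [div_rpow hr hs.le]; field_simp
      have h5 : s^α * (1 + α*(r/s-1)) = s^α + α*(s^(α-1)*(r-s)) := by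
        rw [show s^(α-1) = s^α/s from rpow_sub_one hs.ne' α]; field_simp
      have h2 : s^α + α*(s^(α-1)*(r-s)) ≤ r^α := by rw [← h5, ← h4]; exact h3
      have key2 : s^(α-1) ≤ (s+r)^(α-1) := rpow_le_rpow hs.le (by linarith) (by linarith)
      have h12 : s^(α-1)*(s-r) ≤ (s+r)^(α-1)*(s-r) :=
        mul_le_mul_of_nonneg_right key2 (by linarith)
      have h13 : α*(s^(α-1)*(s-r)) ≤ α*((s+r)^(α-1)*(s-r)) := by
        apply mul_le_mul_of_nonneg_left h12 hα.le
      nlinarith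
  · refine ⟨4, by norm_num, fun s r hr hrs => ?_⟩
    rcases (hr.trans hrs).eq_or_lt with h | hs
    · have hr0 : r = 0 := le_antisymm (hrs.trans h.ge) hr
      rw [hr0, ← h]; simp
    · rcases le_or_gt (2*r) s with hc | hc
      · have h1' : (2*s)^(α-1) ≤ (s+r)^(α-1) :=
          rpow_le_rpow_of_nonpos (by linarith) (by linarith) (by linarith)
        have e1 : ((2:ℝ)*s)^(α-1) = 2^(α-1) * s^(α-1) := mul_rpow (by norm_num) hs.le
        have e2 : s^(α-1) * s = s^α := by rw [← rpow_add_one hs.ne' (α-1), sub_add_cancel]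
        have e3 : (1:ℝ) ≤ 2^α := one_le_rpow one_le_two hα.le
        have e4 : (2:ℝ)^α = 2^(α-1) * 2 := by
          rw [← rpow_add_one (by norm_num : (2:ℝ) ≠ 0) (α-1), sub_add_cancel]
        have h6 : 4*((s/2) * ((2*s)^(α-1))) ≤ 4*((s-r) * (s+r)^(α-1)) := by
          apply mul_le_mul_of_nonneg_left _ (by norm_num)
          apply mul_le_mul (by linarith) h1' (rpow_nonneg (by linarith) _) (by linarith)
        have h7 : 4*((s/2) * ((2*s)^(α-1))) = 2^α * s^α := by rw [e1, e4, ← e2]; ring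
        have h8 : s^α ≤ 2^α * s^α := by nlinarith [rpow_pos_of_pos hs α]
        have h9 : 0 ≤ r^α := rpow_nonneg hr α
        linarith
      · have hr0 : 0 < r := by linarith
        have hb := rpow_one_add_le_one_add_mul_self (s := s/r - 1)
          (by nlinarith [div_nonneg (hr.trans hrs) hr0.le]) hα.le h1.le
        rw [show 1 + (s/r - 1) = s/r by ring] at hb
        have h3 := mul_le_mul_of_nonneg_left hb (rpow_pos_of_pos hr0 α).le
        have h4 : r^α * (s/r)^α = s^α := by rw [div_rpow (hr.trans hrs) hr0.le]; field_simp
        have h5 : r^α * (1 + α*(s/r-1)) = r^α + α*(r^(α-1)*(s-r)) := by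
          rw [show r^(α-1) = r^α/r from rpow_sub_one hr0.ne' α]; field_simp
        have h2 : s^α ≤ r^α + α*(r^(α-1)*(s-r)) := by rw [← h5, ← h4]; exact h3
        have h6 : r^(α-1) ≤ ((s+r)/3)^(α-1) :=
          rpow_le_rpow_of_nonpos (by linarith) (by linarith) (by linarith)
        have h7 : ((s+r)/3)^(α-1) = (s+r)^(α-1) * (3:ℝ)^(1-α) := by
          rw [div_rpow (by linarith) (by norm_num), show (1:ℝ)-α = -(α-1) by ring,
            rpow_neg (by norm_num)]
          ring
        have h8 : (3:ℝ)^(1-α) ≤ 3 := by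
          calc (3:ℝ)^(1-α) ≤ 3^(1:ℝ) := rpow_le_rpow_of_exponent_le (by norm_num) (by linarith)
            _ = 3 := rpow_one 3
        have hM : 0 ≤ (s+r)^(α-1) := rpow_nonneg (by linarith) _
        have h10 : r^(α-1) ≤ 3*(s+r)^(α-1) := by nlinarith
        have hX : 0 ≤ r^(α-1)*(s-r) := mul_nonneg (rpow_nonneg hr0.le _) (by linarith)
        have h12 : α*(r^(α-1)*(s-r)) ≤ r^(α-1)*(s-r) := by nlinarith
        have h13 : r^(α-1)*(s-r) ≤ (3*(s+r)^(α-1))*(s-r) :=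
          mul_le_mul_of_nonneg_right h10 (by linarith)
        have h14 : 0 ≤ (s-r)*(s+r)^(α-1) := mul_nonneg (by linarith) hM
        nlinarith

lemma fact_sum_up {α : ℝ} (hα : 0 < α) : ∀ s r : ℝ, 0 ≤ r → r ≤ s →
    s ^ α + r ^ α ≤ 2 * ((s + r) ^ α) := by
  intro s r hr hrs
  have h1 : s^α ≤ (s+r)^α := rpow_le_rpow (hr.trans hrs) (by linarith) hα.le
  have h2 : r^α ≤ (s+r)^α := rpow_le_rpow hr (by linarith) hα.le
  linarith

lemma fact_sum_low {α : ℝ} (hα : 0 < α) : ∃ c : ℝ, 0 < c ∧ ∀ s r : ℝ, 0 ≤ r → r ≤ s →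
    c * ((s + r) ^ α) ≤ s ^ α + r ^ α := by
  refine ⟨(2:ℝ)^(-α), rpow_pos_of_pos two_pos _, fun s r hr hrs => ?_⟩
  have hs : 0 ≤ s := hr.trans hrs
  have h1 : (s+r)^α ≤ ((2:ℝ)*s)^α := rpow_le_rpow (by linarith) (by linarith) hα.le
  have e1 : ((2:ℝ)*s)^α = 2^α * s^α := mul_rpow (by norm_num) hs
  have h2 : (2:ℝ)^(-α) * (s+r)^α ≤ (2:ℝ)^(-α) * (2^α * s^α) := by
    apply mul_le_mul_of_nonneg_left (by rw [← e1]; exact h1) (rpow_nonneg (by norm_num) _)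
  have e2 : (2:ℝ)^(-α) * (2:ℝ)^α = 1 := by
    rw [← rpow_add (by norm_num : (0:ℝ) < 2)]; simp
  have h3 : 0 ≤ r^α := rpow_nonneg hr α
  nlinarith [rpow_nonneg hs α]


lemma keyAux {p : ℝ} (hp : 1 < p) : ∃ c C : ℝ, 0 < c ∧ 0 < C ∧ ∀ s r u : ℝ,
    0 ≤ r → r ≤ s → |u| ≤ s * r →
    c * ((s^2 + r^2 - 2*u) * (s+r)^(p-2)) ≤ s^p + r^p - (s^(p-2) + r^(p-2)) * u ∧
    s^p + r^p - (s^(p-2) + r^(p-2)) * u ≤ C * ((s^2 + r^2 - 2*u) * (s+r)^(p-2)) := by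
  have hα : 0 < p - 1 := by linarith
  obtain ⟨c1, hc1, H1⟩ := fact_low hα
  obtain ⟨C1, hC1, H2⟩ := fact_up hα
  obtain ⟨c2, hc2, H3⟩ := fact_sum_low hα
  have H4 := fact_sum_up hα
  refine ⟨min c1 c2, max C1 2, lt_min hc1 hc2, by positivity, fun s r u hr hrs hu => ?_⟩
  have hs : 0 ≤ s := hr.trans hrs
  rcases hs.eq_or_lt with h | hs0
  · have hr0 : r = 0 := le_antisymm (hrs.trans h.ge) hr
    have hu0 : u = 0 := by
      rw [hr0, ← h] at hu
      exact abs_eq_zero.mp (le_antisymm (by simpa using hu) (abs_nonneg u))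
    rw [hr0, ← h, hu0]
    simp [zero_rpow (by positivity : p ≠ 0)]
  · have hsr : 0 < s + r := by linarith
    have hM : 0 ≤ (s+r)^(p-2) := rpow_nonneg hsr.le _
    have es1 : s^(p-2) * s = s^(p-1) := by
      rw [← rpow_add_one hs0.ne' (p-2), show p-2+1 = p-1 by ring]
    have es2 : s^(p-1) * s = s^p := by
      rw [← rpow_add_one hs0.ne' (p-1), show p-1+1 = p by ring]
    have er1 : r^(p-2) * r = r^(p-1) := by
      rw [← rpow_add_one' hr (by intro hh; apply hα.ne'; linarith), show p-2+1 = p-1 by ring]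
    have er2 : r^(p-1) * r = r^p := by
      rw [← rpow_add_one' hr (by intro hh; apply (lt_trans one_pos hp).ne'; linarith),
        show p-1+1 = p by ring]
    have esr2 : (s+r)^(p-2) * (s+r) = (s+r)^(p-1) := by
      rw [← rpow_add_one hsr.ne' (p-2), show p-2+1 = p-1 by ring]
    have Vplus : s^p + r^p - (s^(p-2)+r^(p-2))*(s*r) = (s-r)*(s^(p-1)-r^(p-1)) := by
      rw [← es2, ← er2, ← es1, ← er1]; ring
    have Vminus : s^p + r^p + (s^(p-2)+r^(p-2))*(s*r) = (s+r)*(s^(p-1)+r^(p-1)) := by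
      rw [← es2, ← er2, ← es1, ← er1]; ring
    have EP1 : c1*((s-r)*(s+r)^(p-2)) ≤ s^(p-1) - r^(p-1) := by
      have h := H1 s r hr hrs
      rwa [show p-1-1 = p-2 by ring] at h
    have EP2 : s^(p-1) - r^(p-1) ≤ C1*((s-r)*(s+r)^(p-2)) := by
      have h := H2 s r hr hrs
      rwa [show p-1-1 = p-2 by ring] at h
    have EP3 : c2*(s+r)^(p-1) ≤ s^(p-1) + r^(p-1) := H3 s r hr hrs
    have EP4 : s^(p-1) + r^(p-1) ≤ 2*(s+r)^(p-1) := H4 s r hr hrs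
    set c := min c1 c2 with hcdef
    set C := max C1 2 with hCdef
    have hcc1 : c ≤ c1 := min_le_left _ _
    have hcc2 : c ≤ c2 := min_le_right _ _
    have hCC1 : C1 ≤ C := le_max_left _ _
    have hCC2 : (2:ℝ) ≤ C := le_max_right _ _
    have hc0 : 0 < c := lt_min hc1 hc2
    have hX : 0 ≤ (s-r)*(s+r)^(p-2) := mul_nonneg (by linarith) hM
    have hY : 0 ≤ (s+r)*(s+r)^(p-1) := mul_nonneg hsr.le (rpow_nonneg hsr.le _)
    have hX2 : 0 ≤ (s-r)^2*(s+r)^(p-2) := mul_nonneg (sq_nonneg _) hM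
    have L1 : c*((s-r)^2*(s+r)^(p-2)) ≤ s^p + r^p - (s^(p-2)+r^(p-2))*(s*r) := by
      rw [Vplus]
      calc c*((s-r)^2*(s+r)^(p-2)) ≤ c1*((s-r)^2*(s+r)^(p-2)) :=
            mul_le_mul_of_nonneg_right hcc1 hX2
        _ = (s-r)*(c1*((s-r)*(s+r)^(p-2))) := by ring
        _ ≤ (s-r)*(s^(p-1)-r^(p-1)) := mul_le_mul_of_nonneg_left EP1 (sub_nonneg.2 hrs)
    have L2 : c*((s+r)^2*(s+r)^(p-2)) ≤ s^p + r^p + (s^(p-2)+r^(p-2))*(s*r) := by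
      rw [Vminus]
      have e : (s+r)^2*(s+r)^(p-2) = (s+r)*((s+r)^(p-2)*(s+r)) := by ring
      rw [e, esr2]
      calc c*((s+r)*(s+r)^(p-1)) ≤ c2*((s+r)*(s+r)^(p-1)) :=
            mul_le_mul_of_nonneg_right hcc2 hY
        _ = (s+r)*(c2*(s+r)^(p-1)) := by ring
        _ ≤ (s+r)*(s^(p-1)+r^(p-1)) := mul_le_mul_of_nonneg_left EP3 hsr.le
    have U1 : s^p + r^p - (s^(p-2)+r^(p-2))*(s*r) ≤ C*((s-r)^2*(s+r)^(p-2)) := by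
      rw [Vplus]
      calc (s-r)*(s^(p-1)-r^(p-1)) ≤ (s-r)*(C1*((s-r)*(s+r)^(p-2))) :=
            mul_le_mul_of_nonneg_left EP2 (sub_nonneg.2 hrs)
        _ = C1*((s-r)^2*(s+r)^(p-2)) := by ring
        _ ≤ C*((s-r)^2*(s+r)^(p-2)) := mul_le_mul_of_nonneg_right hCC1 hX2
    have U2 : s^p + r^p + (s^(p-2)+r^(p-2))*(s*r) ≤ C*((s+r)^2*(s+r)^(p-2)) := by
      rw [Vminus]
      have e : (s+r)^2*(s+r)^(p-2) = (s+r)*((s+r)^(p-2)*(s+r)) := by ring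
      rw [e, esr2]
      calc (s+r)*(s^(p-1)+r^(p-1)) ≤ (s+r)*(2*(s+r)^(p-1)) :=
            mul_le_mul_of_nonneg_left EP4 hsr.le
        _ = 2*((s+r)*(s+r)^(p-1)) := by ring
        _ ≤ C*((s+r)*(s+r)^(p-1)) := mul_le_mul_of_nonneg_right hCC2 hY
    obtain ⟨hu1, hu2⟩ := abs_le.mp hu
    constructor
    · rcases le_or_gt 0 ((s^(p-2)+r^(p-2)) - 2*c*(s+r)^(p-2)) with h | h
      · have h' := mul_le_mul_of_nonneg_left hu2 h
        linarith [L1]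
      · have h' := mul_le_mul_of_nonpos_left hu1 h.le
        linarith [L2]
    · rcases le_or_gt 0 ((s^(p-2)+r^(p-2)) - 2*C*(s+r)^(p-2)) with h | h
      · have h' := mul_le_mul_of_nonneg_left hu1 h
        linarith [U2]
      · have h' := mul_le_mul_of_nonpos_left hu2 h.le
        linarith [U1]

lemma key {p : ℝ} (hp : 1 < p) : ∃ c C : ℝ, 0 < c ∧ 0 < C ∧ ∀ s r u : ℝ,
    0 ≤ s → 0 ≤ r → |u| ≤ s * r →
    c * ((s^2 + r^2 - 2*u) * (s+r)^(p-2)) ≤ s^p + r^p - (s^(p-2) + r^(p-2)) * u ∧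
    s^p + r^p - (s^(p-2) + r^(p-2)) * u ≤ C * ((s^2 + r^2 - 2*u) * (s+r)^(p-2)) := by
  obtain ⟨c, C, hc, hC, H⟩ := keyAux hp
  refine ⟨c, C, hc, hC, fun s r u hs hr hu => ?_⟩
  rcases le_total r s with h | h
  · exact H s r u hr h hu
  · obtain ⟨t1, t2⟩ := H r s u hs h (by rwa [mul_comm])
    rw [add_comm r s] at t1 t2
    constructor <;> linarith


lemma rpow_sub_two_mul_sq {p : ℝ} (hp : 0 < p) {y : ℝ} (hy : 0 ≤ y) :
    y^(p-2) * y^2 = y^p := by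
  rcases hy.eq_or_lt with h | h
  · rw [← h, zero_rpow hp.ne']; simp
  · rw [← rpow_natCast y 2, ← rpow_add h, show p-2+((2:ℕ):ℝ) = p by push_cast; ring]

lemma delta_eq {d : ℕ} {p : ℝ} (hp : 1 < p) (a b : EuclideanSpace ℝ (Fin d)) :
    ∃ g : ℝ → ℝ, Continuous g ∧
      (∀ t, g t = p * ‖a + t•b‖^(p-2) * ⟪a + t•b, b⟫) ∧
      ‖a+b‖^p - ‖a‖^p - p*(‖a‖^(p-2)*⟪a,b⟫) = ∫ t in (0:ℝ)..1, (g t - g 0) := by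
  set F : EuclideanSpace ℝ (Fin d) → ℝ := fun x => ‖x‖^p with hF
  refine ⟨fun t => p * ‖a + t•b‖^(p-2) * ⟪a + t•b, b⟫, ?_, fun t => rfl, ?_⟩
  · have h1 : Continuous (fun x : EuclideanSpace ℝ (Fin d) => fderiv ℝ F x) :=
      (contDiff_norm_rpow hp).continuous_fderiv one_ne_zero
    have hcurve : Continuous (fun t : ℝ => a + t•b) := by continuity
    have h2 : Continuous (fun t : ℝ => (fderiv ℝ F (a + t•b)) b) :=
      (h1.comp hcurve).clm_apply continuous_const
    convert h2 using 1
    funext t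
    rw [show fderiv ℝ F (a+t•b) = (p * ‖a+t•b‖^(p-2)) • innerSL ℝ (a+t•b) from
      fderiv_norm_rpow (a+t•b) hp]
    simp only [ContinuousLinearMap.smul_apply, innerSL_apply_apply, smul_eq_mul]
  · have hg : ∀ t : ℝ, HasDerivAt (fun t : ℝ => F (a + t•b))
        (p * ‖a + t•b‖^(p-2) * ⟪a + t•b, b⟫) t := by
      intro t
      have hγ : HasDerivAt (fun t : ℝ => a + t•b) b t := by
        simpa using ((hasDerivAt_id t).smul_const b).const_add a
      have := (hasFDerivAt_norm_rpow (a+t•b) hp).comp_hasDerivAt t hγ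
      convert this using 1
      all_goals rfl
    have hgc : Continuous (fun t : ℝ => p * ‖a + t•b‖^(p-2) * ⟪a + t•b, b⟫) := by
      have h1 : Continuous (fun x : EuclideanSpace ℝ (Fin d) => fderiv ℝ F x) :=
        (contDiff_norm_rpow hp).continuous_fderiv one_ne_zero
      have hcurve : Continuous (fun t : ℝ => a + t•b) := by continuity
      have h2 : Continuous (fun t : ℝ => (fderiv ℝ F (a + t•b)) b) :=
        (h1.comp hcurve).clm_apply continuous_const
      convert h2 using 1
      funext t
      rw [show fderiv ℝ F (a+t•b) = (p * ‖a+t•b‖^(p-2)) • innerSL ℝ (a+t•b) from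
        fderiv_norm_rpow (a+t•b) hp]
      simp only [ContinuousLinearMap.smul_apply, innerSL_apply_apply, smul_eq_mul]
    have hFTC : ∫ t in (0:ℝ)..1, (p * ‖a + t•b‖^(p-2) * ⟪a + t•b, b⟫) =
        F (a + (1:ℝ)•b) - F (a + (0:ℝ)•b) :=
      intervalIntegral.integral_eq_sub_of_hasDerivAt (fun t _ => hg t)
        (hgc.intervalIntegrable 0 1)
    rw [intervalIntegral.integral_sub (hgc.intervalIntegrable 0 1) intervalIntegrable_const,
      hFTC, intervalIntegral.integral_const]
    simp only [one_smul, zero_smul, add_zero, hF, smul_eq_mul]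
    ring


lemma core {d : ℕ} {p : ℝ} (hp : 1 < p) {c C : ℝ}
    (Hkey : ∀ s r u : ℝ, 0 ≤ s → 0 ≤ r → |u| ≤ s * r →
      c * ((s^2 + r^2 - 2*u) * (s+r)^(p-2)) ≤ s^p + r^p - (s^(p-2) + r^(p-2)) * u ∧
      s^p + r^p - (s^(p-2) + r^(p-2)) * u ≤ C * ((s^2 + r^2 - 2*u) * (s+r)^(p-2)))
    (a b : EuclideanSpace ℝ (Fin d)) :
    ∃ g : ℝ → ℝ, Continuous g ∧
      (‖a+b‖^p - ‖a‖^p - p*(‖a‖^(p-2)*⟪a,b⟫) = ∫ t in (0:ℝ)..1, (g t - g 0)) ∧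
      ∀ t : ℝ, 0 ≤ t → t ≤ 1 →
        (t*(‖a‖+‖b‖) ≤ 2*(‖a+t•b‖+‖a‖)) ∧ (‖a+t•b‖+‖a‖ ≤ 2*(‖a‖+‖b‖)) ∧
        p*(c*((t*‖b‖)^2*(‖a+t•b‖+‖a‖)^(p-2))) ≤ t*(g t - g 0) ∧
        t*(g t - g 0) ≤ p*(C*((t*‖b‖)^2*(‖a+t•b‖+‖a‖)^(p-2))) := by
  have hppos : 0 < p := by linarith
  obtain ⟨g, hgc, hgdef, hΔ⟩ := delta_eq hp a b
  have hg0 : g 0 = p * ‖a‖^(p-2) * ⟪a, b⟫ := by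
    rw [hgdef 0]; norm_num
  have hTG : ∀ t : ℝ, t * (g t - g 0) =
      p * (‖a+t•b‖^p + ‖a‖^p - (‖a+t•b‖^(p-2)+‖a‖^(p-2)) * ⟪a+t•b, a⟫) := by
    intro t
    have h2 : a + t•b - a = t•b := add_sub_cancel_left a (t•b)
    have e1 : ⟪a+t•b, b⟫ * t = ⟪a+t•b, a+t•b⟫ - ⟪a+t•b, a⟫ := by
      calc ⟪a+t•b, b⟫ * t = ⟪a+t•b, t•b⟫ := by rw [real_inner_smul_right]; ring
        _ = ⟪a+t•b, (a+t•b) - a⟫ := by rw [h2]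
        _ = ⟪a+t•b, a+t•b⟫ - ⟪a+t•b, a⟫ := inner_sub_right _ _ _
    have e2 : ⟪a, b⟫ * t = ⟪a+t•b, a⟫ - ⟪a, a⟫ := by
      calc ⟪a, b⟫ * t = ⟪a, t•b⟫ := by rw [real_inner_smul_right]; ring
        _ = ⟪a, (a+t•b) - a⟫ := by rw [h2]
        _ = ⟪a, a+t•b⟫ - ⟪a, a⟫ := inner_sub_right _ _ _
        _ = ⟪a+t•b, a⟫ - ⟪a, a⟫ := by rw [real_inner_comm]
    have e3 : ⟪a+t•b, a+t•b⟫ = ‖a+t•b‖^2 := real_inner_self_eq_norm_sq _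
    have e4 : ⟪a, a⟫ = ‖a‖^2 := real_inner_self_eq_norm_sq _
    have e5 : ‖a+t•b‖^(p-2) * ‖a+t•b‖^2 = ‖a+t•b‖^p :=
      rpow_sub_two_mul_sq hppos (norm_nonneg _)
    have e6 : ‖a‖^(p-2) * ‖a‖^2 = ‖a‖^p := rpow_sub_two_mul_sq hppos (norm_nonneg _)
    rw [hgdef t, hg0]
    linear_combination (p*‖a+t•b‖^(p-2))*e1 - (p*‖a‖^(p-2))*e2 +
      (p*‖a+t•b‖^(p-2))*e3 + (p*‖a‖^(p-2))*e4 + p*e5 + p*e6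
  refine ⟨g, hgc, hΔ, fun t ht0 ht1 => ?_⟩
  have hlow : t*(‖a‖+‖b‖) ≤ 2*(‖a+t•b‖+‖a‖) := by
    have h1 : ‖(a + t•b) - a‖ ≤ ‖a+t•b‖ + ‖a‖ := norm_sub_le _ _
    rw [add_sub_cancel_left, norm_smul, Real.norm_eq_abs, abs_of_nonneg ht0] at h1
    have h2 : t*‖a‖ ≤ ‖a‖ := by nlinarith [norm_nonneg a]
    nlinarith [norm_nonneg (a+t•b), norm_nonneg a]
  have hup : ‖a+t•b‖+‖a‖ ≤ 2*(‖a‖+‖b‖) := by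
    have h1 := norm_add_le a (t•b)
    rw [norm_smul, Real.norm_eq_abs, abs_of_nonneg ht0] at h1
    nlinarith [norm_nonneg b, mul_nonneg (sub_nonneg.2 ht1) (norm_nonneg b)]
  refine ⟨hlow, hup, ?_⟩
  have hu := abs_real_inner_le_norm (a+t•b) a
  have hk := Hkey ‖a+t•b‖ ‖a‖ ⟪a+t•b, a⟫ (norm_nonneg _) (norm_nonneg _) hu
  have hK : ‖a+t•b‖^2 + ‖a‖^2 - 2*⟪a+t•b, a⟫ = (t*‖b‖)^2 := by
    have h1 := norm_sub_sq_real (a+t•b) a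
    rw [add_sub_cancel_left, norm_smul, Real.norm_eq_abs, abs_of_nonneg ht0] at h1
    linarith [h1]
  rw [hK] at hk
  constructor
  · calc p*(c*((t*‖b‖)^2*(‖a+t•b‖+‖a‖)^(p-2)))
        ≤ p*(‖a+t•b‖^p + ‖a‖^p - (‖a+t•b‖^(p-2)+‖a‖^(p-2)) * ⟪a+t•b, a⟫) :=
          mul_le_mul_of_nonneg_left hk.1 hppos.le
      _ = t*(g t - g 0) := (hTG t).symm
  · calc t*(g t - g 0)
        = p*(‖a+t•b‖^p + ‖a‖^p - (‖a+t•b‖^(p-2)+‖a‖^(p-2)) * ⟪a+t•b, a⟫) := hTG t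
      _ ≤ p*(C*((t*‖b‖)^2*(‖a+t•b‖+‖a‖)^(p-2))) :=
          mul_le_mul_of_nonneg_left hk.2 hppos.le


lemma main_bounds {d : ℕ} {p : ℝ} (hp : 1 < p) :
    ∃ cl Cu : ℝ, 0 < cl ∧ 0 < Cu ∧ ∀ a b : EuclideanSpace ℝ (Fin d),
      cl * (‖b‖^2 * (‖a‖+‖b‖)^(p-2)) ≤ ‖a+b‖^p - ‖a‖^p - p*(‖a‖^(p-2)*⟪a,b⟫) ∧
      ‖a+b‖^p - ‖a‖^p - p*(‖a‖^(p-2)*⟪a,b⟫) ≤ Cu * (‖b‖^2 * (‖a‖+‖b‖)^(p-2)) := by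
  obtain ⟨c, C, hc, hC, Hkey⟩ := key hp
  have hppos : 0 < p := by linarith
  have h2p : (0:ℝ) < 2 := by norm_num
  have hr1 : (0:ℝ) < (2:ℝ)^(p-2) := rpow_pos_of_pos h2p _
  have hr2 : (0:ℝ) < (2:ℝ)^(2-p) := rpow_pos_of_pos h2p _
  rcases le_or_gt p 2 with hple | hpge
  · -- case p ≤ 2
    have hq : p - 2 ≤ 0 := by linarith
    refine ⟨p*c*(2:ℝ)^(p-2)/2, C*(2:ℝ)^(2-p),
      div_pos (mul_pos (mul_pos hppos hc) hr1) h2p, mul_pos hC hr2, fun a b => ?_⟩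
    rcases eq_or_ne b 0 with rfl | hb
    · constructor <;> simp [inner_zero_right]
    have hB : 0 < ‖b‖ := norm_pos_iff.mpr hb
    have hW : 0 < ‖a‖ + ‖b‖ := by have := norm_nonneg a; linarith
    have hZ : 0 ≤ ‖b‖^2*(‖a‖+‖b‖)^(p-2) := mul_nonneg (sq_nonneg _) (rpow_nonneg hW.le _)
    obtain ⟨g, hgc, hΔ, hpt⟩ := core hp Hkey a b
    rw [hΔ]
    have plow : ∀ t ∈ Set.Icc (0:ℝ) 1,
        (p*c*(2:ℝ)^(p-2)*(‖b‖^2*(‖a‖+‖b‖)^(p-2)))*t ≤ g t - g 0 := by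
      rintro t ⟨ht0, ht1⟩
      rcases ht0.eq_or_lt with h | htpos
      · rw [← h]; simp
      obtain ⟨hlow, hup, hk1, hk2⟩ := hpt t ht0 ht1
      have hxr : 0 < ‖a+t•b‖+‖a‖ := by nlinarith [mul_pos htpos hW]
      have hN : ((2:ℝ)*(‖a‖+‖b‖))^(p-2) ≤ (‖a+t•b‖+‖a‖)^(p-2) :=
        rpow_le_rpow_of_nonpos hxr hup hq
      have e2W : ((2:ℝ)*(‖a‖+‖b‖))^(p-2) = (2:ℝ)^(p-2)*(‖a‖+‖b‖)^(p-2) :=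
        mul_rpow (by norm_num) hW.le
      refine (mul_le_mul_iff_of_pos_left htpos).mp ?_
      calc t*((p*c*(2:ℝ)^(p-2)*(‖b‖^2*(‖a‖+‖b‖)^(p-2)))*t)
          = p*(c*((t*‖b‖)^2*(((2:ℝ)*(‖a‖+‖b‖))^(p-2)))) := by rw [e2W]; ring
        _ ≤ p*(c*((t*‖b‖)^2*((‖a+t•b‖+‖a‖)^(p-2)))) :=
            mul_le_mul_of_nonneg_left (mul_le_mul_of_nonneg_left
              (mul_le_mul_of_nonneg_left hN (sq_nonneg _)) hc.le) hppos.le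
        _ ≤ t*(g t - g 0) := hk1
    have pup : ∀ t ∈ Set.Icc (0:ℝ) 1,
        g t - g 0 ≤ (p*C*(2:ℝ)^(2-p)*(‖b‖^2*(‖a‖+‖b‖)^(p-2)))*t^(p-1) := by
      rintro t ⟨ht0, ht1⟩
      rcases ht0.eq_or_lt with h | htpos
      · rw [← h, zero_rpow (show p - 1 ≠ 0 from sub_ne_zero.mpr (ne_of_gt hp)), mul_zero]; simp
      obtain ⟨hlow, hup, hk1, hk2⟩ := hpt t ht0 ht1
      have hN2 : (‖a+t•b‖+‖a‖)^(p-2) ≤ (t*(‖a‖+‖b‖)/2)^(p-2) :=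
        rpow_le_rpow_of_nonpos (by positivity) (by linarith) hq
      have eTW : (t*(‖a‖+‖b‖)/2)^(p-2) = t^(p-2)*((‖a‖+‖b‖)^(p-2)*(2:ℝ)^(2-p)) := by
        rw [div_rpow (by positivity) (by norm_num), mul_rpow htpos.le hW.le,
          show (2:ℝ)-p = -(p-2) by ring, rpow_neg (by norm_num)]
        ring
      have ett : t^(2:ℕ)*t^(p-2) = t*t^(p-1) := by
        have u1 : t^(2:ℕ)*t^(p-2) = t^p := by
          rw [← rpow_natCast t 2, ← rpow_add htpos, show ((2:ℕ):ℝ)+(p-2) = p by push_cast; ring]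
        have u2 : t*t^(p-1) = t^p := by
          nth_rewrite 1 [← rpow_one t]
          rw [← rpow_add htpos, show (1:ℝ)+(p-1) = p by ring]
        rw [u1, u2]
      refine (mul_le_mul_iff_of_pos_left htpos).mp ?_
      calc t*(g t - g 0) ≤ p*(C*((t*‖b‖)^2*((‖a+t•b‖+‖a‖)^(p-2)))) := hk2
        _ ≤ p*(C*((t*‖b‖)^2*((t*(‖a‖+‖b‖)/2)^(p-2)))) :=
            mul_le_mul_of_nonneg_left (mul_le_mul_of_nonneg_left
              (mul_le_mul_of_nonneg_left hN2 (sq_nonneg _)) hC.le) hppos.le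
        _ = t*((p*C*(2:ℝ)^(2-p)*(‖b‖^2*(‖a‖+‖b‖)^(p-2)))*t^(p-1)) := by
            rw [eTW]
            linear_combination (p*C*(‖b‖^2*((‖a‖+‖b‖)^(p-2)*(2:ℝ)^(2-p))))*ett
    have hIg : IntervalIntegrable (fun t => g t - g 0) MeasureTheory.volume 0 1 :=
      (hgc.sub continuous_const).intervalIntegrable 0 1
    have hIlin : IntervalIntegrable
        (fun t : ℝ => (p*c*(2:ℝ)^(p-2)*(‖b‖^2*(‖a‖+‖b‖)^(p-2)))*t) MeasureTheory.volume 0 1 :=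
      (continuous_const.mul continuous_id).intervalIntegrable 0 1
    have hIr : IntervalIntegrable
        (fun t : ℝ => (p*C*(2:ℝ)^(2-p)*(‖b‖^2*(‖a‖+‖b‖)^(p-2)))*t^(p-1))
        MeasureTheory.volume 0 1 :=
      (intervalIntegral.intervalIntegrable_rpow (Or.inl (by linarith))).const_mul _
    have Ilow := intervalIntegral.integral_mono_on (by norm_num : (0:ℝ) ≤ 1) hIlin hIg plow
    have Iup := intervalIntegral.integral_mono_on (by norm_num : (0:ℝ) ≤ 1) hIg hIr pup
    have e_int1 : ∫ t in (0:ℝ)..1, (p*c*(2:ℝ)^(p-2)*(‖b‖^2*(‖a‖+‖b‖)^(p-2)))*t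
        = (p*c*(2:ℝ)^(p-2)*(‖b‖^2*(‖a‖+‖b‖)^(p-2)))/2 := by
      rw [intervalIntegral.integral_const_mul, integral_id]; ring
    have e_int2 : ∫ t in (0:ℝ)..1, (p*C*(2:ℝ)^(2-p)*(‖b‖^2*(‖a‖+‖b‖)^(p-2)))*t^(p-1)
        = C*(2:ℝ)^(2-p)*(‖b‖^2*(‖a‖+‖b‖)^(p-2)) := by
      rw [intervalIntegral.integral_const_mul, integral_rpow (Or.inl (by linarith : (-1:ℝ) < p-1))]
      rw [show p-1+1 = p by ring, one_rpow, zero_rpow hppos.ne']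
      field_simp
      ring
    constructor
    · calc p*c*(2:ℝ)^(p-2)/2 * (‖b‖^2*(‖a‖+‖b‖)^(p-2))
          = (p*c*(2:ℝ)^(p-2)*(‖b‖^2*(‖a‖+‖b‖)^(p-2)))/2 := by ring
        _ ≤ ∫ t in (0:ℝ)..1, (g t - g 0) := by rw [← e_int1]; exact Ilow
    · calc (∫ t in (0:ℝ)..1, (g t - g 0))
          ≤ C*(2:ℝ)^(2-p)*(‖b‖^2*(‖a‖+‖b‖)^(p-2)) := by rw [← e_int2]; exact Iup
        _ = C*(2:ℝ)^(2-p)*(‖b‖^2*(‖a‖+‖b‖)^(p-2)) := rfl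
  · -- case 2 < p
    have hq : 0 ≤ p - 2 := by linarith
    refine ⟨c*(2:ℝ)^(2-p), p*C*(2:ℝ)^(p-2)/2,
      mul_pos hc hr2, div_pos (mul_pos (mul_pos hppos hC) hr1) h2p, fun a b => ?_⟩
    rcases eq_or_ne b 0 with rfl | hb
    · constructor <;> simp [inner_zero_right]
    have hB : 0 < ‖b‖ := norm_pos_iff.mpr hb
    have hW : 0 < ‖a‖ + ‖b‖ := by have := norm_nonneg a; linarith
    have hZ : 0 ≤ ‖b‖^2*(‖a‖+‖b‖)^(p-2) := mul_nonneg (sq_nonneg _) (rpow_nonneg hW.le _)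
    obtain ⟨g, hgc, hΔ, hpt⟩ := core hp Hkey a b
    rw [hΔ]
    have plow : ∀ t ∈ Set.Icc (0:ℝ) 1,
        (p*c*(2:ℝ)^(2-p)*(‖b‖^2*(‖a‖+‖b‖)^(p-2)))*t^(p-1) ≤ g t - g 0 := by
      rintro t ⟨ht0, ht1⟩
      rcases ht0.eq_or_lt with h | htpos
      · rw [← h, zero_rpow (show p - 1 ≠ 0 from sub_ne_zero.mpr (ne_of_gt hp)), mul_zero]; simp
      obtain ⟨hlow, hup, hk1, hk2⟩ := hpt t ht0 ht1
      have hN : (t*(‖a‖+‖b‖)/2)^(p-2) ≤ (‖a+t•b‖+‖a‖)^(p-2) :=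
        rpow_le_rpow (by positivity) (by linarith) hq
      have eTW : (t*(‖a‖+‖b‖)/2)^(p-2) = t^(p-2)*((‖a‖+‖b‖)^(p-2)*(2:ℝ)^(2-p)) := by
        rw [div_rpow (by positivity) (by norm_num), mul_rpow htpos.le hW.le,
          show (2:ℝ)-p = -(p-2) by ring, rpow_neg (by norm_num)]
        ring
      have ett : t^(2:ℕ)*t^(p-2) = t*t^(p-1) := by
        have u1 : t^(2:ℕ)*t^(p-2) = t^p := by
          rw [← rpow_natCast t 2, ← rpow_add htpos, show ((2:ℕ):ℝ)+(p-2) = p by push_cast; ring]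
        have u2 : t*t^(p-1) = t^p := by
          nth_rewrite 1 [← rpow_one t]
          rw [← rpow_add htpos, show (1:ℝ)+(p-1) = p by ring]
        rw [u1, u2]
      refine (mul_le_mul_iff_of_pos_left htpos).mp ?_
      calc t*((p*c*(2:ℝ)^(2-p)*(‖b‖^2*(‖a‖+‖b‖)^(p-2)))*t^(p-1))
          = p*(c*((t*‖b‖)^2*((t*(‖a‖+‖b‖)/2)^(p-2)))) := by
            rw [eTW]
            linear_combination (-(p*c*(‖b‖^2*((‖a‖+‖b‖)^(p-2)*(2:ℝ)^(2-p)))))*ett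
        _ ≤ p*(c*((t*‖b‖)^2*((‖a+t•b‖+‖a‖)^(p-2)))) :=
            mul_le_mul_of_nonneg_left (mul_le_mul_of_nonneg_left
              (mul_le_mul_of_nonneg_left hN (sq_nonneg _)) hc.le) hppos.le
        _ ≤ t*(g t - g 0) := hk1
    have pup : ∀ t ∈ Set.Icc (0:ℝ) 1,
        g t - g 0 ≤ (p*C*(2:ℝ)^(p-2)*(‖b‖^2*(‖a‖+‖b‖)^(p-2)))*t := by
      rintro t ⟨ht0, ht1⟩
      rcases ht0.eq_or_lt with h | htpos
      · rw [← h]; simp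
      obtain ⟨hlow, hup, hk1, hk2⟩ := hpt t ht0 ht1
      have hN2 : (‖a+t•b‖+‖a‖)^(p-2) ≤ ((2:ℝ)*(‖a‖+‖b‖))^(p-2) :=
        rpow_le_rpow (by positivity) hup hq
      have e2W : ((2:ℝ)*(‖a‖+‖b‖))^(p-2) = (2:ℝ)^(p-2)*(‖a‖+‖b‖)^(p-2) :=
        mul_rpow (by norm_num) hW.le
      refine (mul_le_mul_iff_of_pos_left htpos).mp ?_
      calc t*(g t - g 0) ≤ p*(C*((t*‖b‖)^2*((‖a+t•b‖+‖a‖)^(p-2)))) := hk2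
        _ ≤ p*(C*((t*‖b‖)^2*(((2:ℝ)*(‖a‖+‖b‖))^(p-2)))) :=
            mul_le_mul_of_nonneg_left (mul_le_mul_of_nonneg_left
              (mul_le_mul_of_nonneg_left hN2 (sq_nonneg _)) hC.le) hppos.le
        _ = t*((p*C*(2:ℝ)^(p-2)*(‖b‖^2*(‖a‖+‖b‖)^(p-2)))*t) := by rw [e2W]; ring
    have hIg : IntervalIntegrable (fun t => g t - g 0) MeasureTheory.volume 0 1 :=
      (hgc.sub continuous_const).intervalIntegrable 0 1
    have hIlin : IntervalIntegrable
        (fun t : ℝ => (p*C*(2:ℝ)^(p-2)*(‖b‖^2*(‖a‖+‖b‖)^(p-2)))*t) MeasureTheory.volume 0 1 :=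
      (continuous_const.mul continuous_id).intervalIntegrable 0 1
    have hIr : IntervalIntegrable
        (fun t : ℝ => (p*c*(2:ℝ)^(2-p)*(‖b‖^2*(‖a‖+‖b‖)^(p-2)))*t^(p-1))
        MeasureTheory.volume 0 1 :=
      (intervalIntegral.intervalIntegrable_rpow (Or.inl (by linarith))).const_mul _
    have Ilow := intervalIntegral.integral_mono_on (by norm_num : (0:ℝ) ≤ 1) hIr hIg plow
    have Iup := intervalIntegral.integral_mono_on (by norm_num : (0:ℝ) ≤ 1) hIg hIlin pup
    have e_int1 : ∫ t in (0:ℝ)..1, (p*C*(2:ℝ)^(p-2)*(‖b‖^2*(‖a‖+‖b‖)^(p-2)))*t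
        = (p*C*(2:ℝ)^(p-2)*(‖b‖^2*(‖a‖+‖b‖)^(p-2)))/2 := by
      rw [intervalIntegral.integral_const_mul, integral_id]; ring
    have e_int2 : ∫ t in (0:ℝ)..1, (p*c*(2:ℝ)^(2-p)*(‖b‖^2*(‖a‖+‖b‖)^(p-2)))*t^(p-1)
        = c*(2:ℝ)^(2-p)*(‖b‖^2*(‖a‖+‖b‖)^(p-2)) := by
      rw [intervalIntegral.integral_const_mul, integral_rpow (Or.inl (by linarith : (-1:ℝ) < p-1))]
      rw [show p-1+1 = p by ring, one_rpow, zero_rpow hppos.ne']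
      field_simp
      ring
    constructor
    · calc c*(2:ℝ)^(2-p) * (‖b‖^2*(‖a‖+‖b‖)^(p-2))
          = c*(2:ℝ)^(2-p)*(‖b‖^2*(‖a‖+‖b‖)^(p-2)) := by ring
        _ ≤ ∫ t in (0:ℝ)..1, (g t - g 0) := by rw [← e_int2]; exact Ilow
    · calc (∫ t in (0:ℝ)..1, (g t - g 0))
          ≤ (p*C*(2:ℝ)^(p-2)*(‖b‖^2*(‖a‖+‖b‖)^(p-2)))/2 := by rw [← e_int1]; exact Iup
        _ = p*C*(2:ℝ)^(p-2)/2 * (‖b‖^2*(‖a‖+‖b‖)^(p-2)) := by ring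

end St2Aux

theorem statement_2 (p : ℝ) (hp : 1 < p) (d : ℕ) (hd : 1 ≤ d) :
    ∃ C : ℝ, 0 < C ∧ ∀ a b : Ed d,
      C⁻¹ * (‖b‖ ^ (2 : ℝ) * (‖a‖ + ‖b‖) ^ (p - 2)) ≤
          ‖a + b‖ ^ p - ‖a‖ ^ p - p * (‖a‖ ^ (p - 2) * ⟪a, b⟫) ∧
        ‖a + b‖ ^ p - ‖a‖ ^ p - p * (‖a‖ ^ (p - 2) * ⟪a, b⟫) ≤
          C * (‖b‖ ^ (2 : ℝ) * (‖a‖ + ‖b‖) ^ (p - 2)) := by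
  obtain ⟨cl, Cu, hcl, hCu, H⟩ := St2Aux.main_bounds (d := d) hp
  refine ⟨max Cu cl⁻¹, lt_of_lt_of_le (inv_pos.2 hcl) (le_max_right _ _), fun a b => ?_⟩
  obtain ⟨h1, h2⟩ := H a b
  have e2 : ‖b‖^(2:ℝ) = ‖b‖^(2:ℕ) := by
    rw [← Real.rpow_natCast ‖b‖ 2]; norm_num
  have hW : (0:ℝ) ≤ ‖a‖ + ‖b‖ := by positivity
  have hZ : 0 ≤ ‖b‖^(2:ℕ)*(‖a‖+‖b‖)^(p-2) :=
    mul_nonneg (sq_nonneg _) (Real.rpow_nonneg hW _)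
  have hinv : (max Cu cl⁻¹)⁻¹ ≤ cl := by
    have h3 : cl⁻¹ ≤ max Cu cl⁻¹ := le_max_right _ _
    have h4 := one_div_le_one_div_of_le (inv_pos.2 hcl) h3
    simpa [one_div] using h4
  constructor
  · calc (max Cu cl⁻¹)⁻¹ * (‖b‖^(2:ℝ) * (‖a‖+‖b‖)^(p-2))
        = (max Cu cl⁻¹)⁻¹ * (‖b‖^(2:ℕ) * (‖a‖+‖b‖)^(p-2)) := by rw [e2]
      _ ≤ cl * (‖b‖^(2:ℕ) * (‖a‖+‖b‖)^(p-2)) := mul_le_mul_of_nonneg_right hinv hZ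
      _ ≤ ‖a + b‖ ^ p - ‖a‖ ^ p - p * (‖a‖ ^ (p - 2) * ⟪a, b⟫) := h1
  · calc ‖a + b‖ ^ p - ‖a‖ ^ p - p * (‖a‖ ^ (p - 2) * ⟪a, b⟫)
        ≤ Cu * (‖b‖^(2:ℕ) * (‖a‖+‖b‖)^(p-2)) := h2
      _ ≤ (max Cu cl⁻¹) * (‖b‖^(2:ℕ) * (‖a‖+‖b‖)^(p-2)) :=
          mul_le_mul_of_nonneg_right (le_max_left _ _) hZ
      _ = (max Cu cl⁻¹) * (‖b‖^(2:ℝ) * (‖a‖+‖b‖)^(p-2)) := by rw [e2]
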